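/- (Theorem 2, reduction step) Let S*, X* be random variables with X* ≤ S* + Δ and S* ≤ X* + Δ where Δ ≥ 0 (i.e., |S* − X*| ≤ Δ), and suppose P(X* > x) is regularly varying at ∞ with negative index and P(Δ > δ(x)·x) = o(P(X* > x)) for some δ(x) → 0. Then P(S* > x) ∼ P(X* > x) as x → ∞. -/

import Mathlib

open MeasureTheory Filter

/- STATEMENT 18 (Theorem 2, reduction step): If `|S* − X*| ≤ Δ` with `Δ ≥ 0`,
`P(X* > x)` is regularly varying at ∞ with negative index, and
`P(Δ > δ(x)·x) = o(P(X* > x))` for some `δ(x) → 0`, then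
`P(S* > x) ∼ P(X* > x)` as `x → ∞`. -/
theorem stmt_18 {Ω : Type*} [MeasurableSpace Ω] (μ : Measure Ω) [IsProbabilityMeasure μ]
    (Sstar Xstar Δ : Ω → ℝ)
    (hΔnn : ∀ ω, 0 ≤ Δ ω)
    (habs : ∀ ω, |Sstar ω - Xstar ω| ≤ Δ ω)
    (ρ : ℝ) (hρ : ρ < 0)
    (hpos : ∀ x : ℝ, 0 < (μ {ω | x < Xstar ω}).toReal)
    (hrv : ∀ y > (0 : ℝ), Tendsto
      (fun x : ℝ => (μ {ω | x * y < Xstar ω}).toReal / (μ {ω | x < Xstar ω}).toReal)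
      atTop (nhds (y ^ ρ)))
    (δ : ℝ → ℝ) (hδpos : ∀ x, 0 < δ x) (hδ0 : Tendsto δ atTop (nhds 0))
    (hΔ : Tendsto
      (fun x : ℝ => (μ {ω | δ x * x < Δ ω}).toReal / (μ {ω | x < Xstar ω}).toReal)
      atTop (nhds 0)) :
    Tendsto (fun x : ℝ => (μ {ω | x < Sstar ω}).toReal / (μ {ω | x < Xstar ω}).toReal)
      atTop (nhds 1) := by
  rw [Metric.tendsto_nhds]
  intro ε hε
  have h4 : (0:ℝ) < ε/4 := by linarith
  have hcont : ContinuousAt (fun t : ℝ => t ^ ρ) 1 :=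
    Real.continuousAt_rpow_const 1 ρ (Or.inl one_ne_zero)
  obtain ⟨η, hηpos, hη⟩ := Metric.continuousAt_iff.mp hcont (ε/4) h4
  set η₀ : ℝ := min (η/2) (1/2) with hη₀def
  have hη₀pos : 0 < η₀ := lt_min (by linarith) (by norm_num)
  have hη₀lt1 : η₀ < 1 := lt_of_le_of_lt (min_le_right _ _) (by norm_num)
  have hη₀η : η₀ < η := lt_of_le_of_lt (min_le_left _ _) (by linarith)
  have hy1pos : (0:ℝ) < 1 - η₀ := by linarith
  have hy2pos : (0:ℝ) < 1 + η₀ := by linarith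
  have hy1 : |(1 - η₀) ^ ρ - 1| < ε/4 := by
    have := hη (x := 1 - η₀) (by
      rw [Real.dist_eq]; rw [abs_lt]; constructor <;> linarith)
    rwa [Real.dist_eq, Real.one_rpow] at this
  have hy2 : |(1 + η₀) ^ ρ - 1| < ε/4 := by
    have := hη (x := 1 + η₀) (by
      rw [Real.dist_eq]; rw [abs_lt]; constructor <;> linarith)
    rwa [Real.dist_eq, Real.one_rpow] at this
  have h1 := Metric.tendsto_nhds.mp (hrv (1 - η₀) hy1pos) (ε/4) h4
  have h2 := Metric.tendsto_nhds.mp (hrv (1 + η₀) hy2pos) (ε/4) h4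
  have hd := Metric.tendsto_nhds.mp hΔ (ε/4) h4
  have hδev : ∀ᶠ x : ℝ in atTop, δ x < η₀ := hδ0.eventually_lt_const hη₀pos
  filter_upwards [h1, h2, hd, hδev, eventually_ge_atTop (0:ℝ)] with x hx1 hx2 hxd hxδ hx0
  have fpos := hpos x
  -- upper bound
  have hub : (μ {ω | x < Sstar ω}).toReal ≤
      (μ {ω | x * (1 - η₀) < Xstar ω}).toReal + (μ {ω | δ x * x < Δ ω}).toReal := by
    have hsub : {ω | x < Sstar ω} ⊆
        {ω | x * (1 - η₀) < Xstar ω} ∪ {ω | δ x * x < Δ ω} := by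
      intro ω hω
      by_cases hc : δ x * x < Δ ω
      · exact Or.inr hc
      · left
        push_neg at hc
        have h := abs_le.mp (habs ω)
        have hδx := le_of_lt hxδ
        simp only [Set.mem_setOf_eq] at hω ⊢
        nlinarith [h.1, h.2, hΔnn ω]
    have hm := (measure_mono hsub).trans (measure_union_le (μ := μ) _ _)
    have := ENNReal.toReal_mono
      (ENNReal.add_ne_top.mpr ⟨measure_ne_top μ _, measure_ne_top μ _⟩) hm
    rwa [ENNReal.toReal_add (measure_ne_top μ _) (measure_ne_top μ _)] at this
  -- lower bound
  have hlb : (μ {ω | x * (1 + η₀) < Xstar ω}).toReal ≤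
      (μ {ω | x < Sstar ω}).toReal + (μ {ω | δ x * x < Δ ω}).toReal := by
    have hsub : {ω | x * (1 + η₀) < Xstar ω} ⊆
        {ω | x < Sstar ω} ∪ {ω | δ x * x < Δ ω} := by
      intro ω hω
      by_cases hc : δ x * x < Δ ω
      · exact Or.inr hc
      · left
        push_neg at hc
        have h := abs_le.mp (habs ω)
        have hδx := le_of_lt hxδ
        simp only [Set.mem_setOf_eq] at hω ⊢
        nlinarith [h.1, h.2, hΔnn ω]
    have hm := (measure_mono hsub).trans (measure_union_le (μ := μ) _ _)
    have := ENNReal.toReal_mono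
      (ENNReal.add_ne_top.mpr ⟨measure_ne_top μ _, measure_ne_top μ _⟩) hm
    rwa [ENNReal.toReal_add (measure_ne_top μ _) (measure_ne_top μ _)] at this
  set f : ℝ := (μ {ω | x < Xstar ω}).toReal
  have hub' : (μ {ω | x < Sstar ω}).toReal / f ≤
      (μ {ω | x * (1 - η₀) < Xstar ω}).toReal / f + (μ {ω | δ x * x < Δ ω}).toReal / f := by
    rw [← add_div]
    exact div_le_div_of_nonneg_right hub fpos.le |>.trans_eq rfl
  have hlb' : (μ {ω | x * (1 + η₀) < Xstar ω}).toReal / f ≤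
      (μ {ω | x < Sstar ω}).toReal / f + (μ {ω | δ x * x < Δ ω}).toReal / f := by
    rw [← add_div]
    exact div_le_div_of_nonneg_right hlb fpos.le |>.trans_eq rfl
  have hdnn : 0 ≤ (μ {ω | δ x * x < Δ ω}).toReal / f := by positivity
  rw [Real.dist_eq, abs_lt] at hx1 hx2 ⊢
  rw [Real.dist_eq, sub_zero, abs_lt] at hxd
  rw [abs_lt] at hy1 hy2
  constructor <;>
    [nlinarith [hx2.1, hxd.2, hy2.1, hlb']; nlinarith [hx1.2, hxd.2, hy1.2, hub']]
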